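/- For 0 < q < 1 and integer ℓ ≥ 2, we have ∑_{j=1}^{∞} j q^j/(1-q^j) < q/(1-q)^3 + ∑_{j=1}^{ℓ-1} j q^j (q^j - q) / ((1-q^j)(1-q)). -/

import Mathlib

theorem tsum_lt_aux (q : ℝ) (hq0 : 0 < q) (hq1 : q < 1) (ℓ : ℕ) (hℓ : 2 ≤ ℓ) :
    (∑' j : ℕ, ((j : ℝ) + 1) * q ^ (j + 1) / (1 - q ^ (j + 1))) <
      q / (1 - q) ^ 3 +
        ∑ j ∈ Finset.range (ℓ - 1),
          ((j : ℝ) + 1) * q ^ (j + 1) * (q ^ (j + 1) - q) / ((1 - q ^ (j + 1)) * (1 - q)) := by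
  have hq1' : (0:ℝ) < 1 - q := by linarith
  have hpow : ∀ j : ℕ, q ^ (j+1) < 1 := fun j => pow_lt_one₀ hq0.le hq1 (Nat.succ_ne_zero j)
  have hpow' : ∀ j : ℕ, (0:ℝ) < 1 - q ^ (j+1) := fun j => by linarith [hpow j]
  have hpowpos : ∀ j : ℕ, (0:ℝ) < q ^ (j+1) := fun j => pow_pos hq0 _
  set a : ℕ → ℝ := fun j => ((j:ℝ)+1) * q^(j+1) / (1 - q^(j+1)) with ha
  set b : ℕ → ℝ := fun j => ((j:ℝ)+1) * q^(j+1) / (1 - q) with hb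
  have hq_norm : ‖q‖ < 1 := by rw [Real.norm_eq_abs, abs_of_pos hq0]; exact hq1
  have h1 : HasSum (fun n : ℕ => (n:ℝ) * q ^ n) (q / (1-q)^2) :=
    hasSum_coe_mul_geometric_of_norm_lt_one hq_norm
  have h2 : HasSum (fun j : ℕ => ((j:ℝ)+1) * q ^ (j+1)) (q / (1-q)^2) := by
    have h := (hasSum_nat_add_iff' (f := fun n : ℕ => (n:ℝ) * q ^ n) 1).mpr h1
    simpa using h
  have h3 : HasSum b (q / (1-q)^3) := by
    have h := h2.div_const (1-q)
    have : q / (1-q)^2 / (1-q) = q / (1-q)^3 := by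
      rw [div_div, ← pow_succ]
    rwa [this] at h
  have hab : ∀ j, a j ≤ b j := by
    intro j
    simp only [ha, hb]
    gcongr
    calc q ^ (j+1) ≤ q ^ 1 := pow_le_pow_of_le_one hq0.le hq1.le (by omega)
      _ = q := pow_one q
  have hanon : ∀ j, 0 ≤ a j := fun j => div_nonneg (by positivity) (hpow' j).le
  have hsa : Summable a := Summable.of_nonneg_of_le hanon hab h3.summable
  set c : ℕ → ℝ := fun j => a j - b j with hc
  have hsc : Summable c := hsa.sub h3.summable
  have hcle : ∀ j, c j ≤ 0 := fun j => by simp [hc]; linarith [hab j]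
  set m := ℓ - 1 with hm
  have hm1 : 1 ≤ m := by omega
  have hcm : c m < 0 := by
    have hqq : q ^ (m+1) < q := by
      calc q ^ (m+1) ≤ q ^ 2 := pow_le_pow_of_le_one hq0.le hq1.le (by omega)
        _ < q := by nlinarith
    have : a m < b m := by
      apply div_lt_div_of_pos_left (by positivity) hq1'
      linarith
    simp only [hc]; linarith
  have htail : (∑' j : ℕ, c (j + m)) < 0 := by
    have hst : Summable (fun j => c (j + m)) := (summable_nat_add_iff m).mpr hsc
    have h0 : (fun j : ℕ => c (j + m)) 0 < (fun _ : ℕ => (0:ℝ)) 0 := by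
      simpa using hcm
    have := Summable.tsum_lt_tsum (f := fun j => c (j + m)) (g := fun _ => (0:ℝ))
      (fun j => hcle _) h0 hst summable_zero
    simpa using this
  have hsplit : (∑ i ∈ Finset.range m, c i) + ∑' j : ℕ, c (j + m) = ∑' j, c j :=
    Summable.sum_add_tsum_nat_add m hsc
  have htsum : (∑' j, a j) = q / (1-q)^3 + ∑' j, c j := by
    have : (∑' j, c j) = (∑' j, a j) - (∑' j, b j) := Summable.tsum_sub hsa h3.summable
    rw [this, h3.tsum_eq]; ring
  have hcform : ∀ j ∈ Finset.range m, c j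
      = ((j:ℝ)+1) * q^(j+1) * (q^(j+1) - q) / ((1 - q^(j+1)) * (1 - q)) := by
    intro j _
    have h1 := (hpow' j).ne'
    have h2 := hq1'.ne'
    simp only [hc, ha, hb]
    field_simp
    ring
  rw [htsum, ← Finset.sum_congr rfl hcform]
  have : (∑' j, c j) < ∑ i ∈ Finset.range m, c i := by
    rw [← hsplit]; linarith
  linarith
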